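/- Let (X, μ) be a probability space, Φ : X → X a measurable, measure-preserving bijection with measurable inverse, and ε : X → X a measurable, measure-preserving map with ε ∘ ε = id and ε ∘ Φ = Φ⁻¹ ∘ ε. Let Ψ : X → ℝ^N be measurable with integrable pairwise products of the form Ψ_i(x)·Ψ_j(Φ^{±1}(x)), and let M ∈ ℝ^{N×N} satisfy Ψ(ε(x)) = M·Ψ(x) for all x ∈ X. Then the matrix C⁻(i,j) := ∫_X Ψ_i(x)·Ψ_j(Φ⁻¹(x)) dμ(x) satisfies C⁻ = M · C⁺ · Mᵀ, where C⁺(i,j) := ∫_X Ψ_i(x)·Ψ_j(Φ(x)) dμ(x). -/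
import Mathlib


open MeasureTheory Matrix

/-- Onsager–Casimir: if `ε` is a measure-preserving involution with `ε ∘ Φ = Φ⁻¹ ∘ ε`
and the observables transform as `Ψ ∘ ε = M·Ψ`, then the backward correlator
`C⁻(i,j) = ∫ Ψᵢ(x)·Ψⱼ(Φ⁻¹x) dμ` satisfies `C⁻ = M · C⁺ · Mᵀ`, where
`C⁺(i,j) = ∫ Ψᵢ(x)·Ψⱼ(Φx) dμ`. -/
theorem onsager_casimir_backward_correlator
    {X : Type*} [MeasurableSpace X] (μ : Measure X) [IsProbabilityMeasure μ]
    (N : ℕ) (Φ Φinv ε : X → X)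
    (hΦ : Measurable Φ) (hΦinv : Measurable Φinv) (hε : Measurable ε)
    (hleft : Function.LeftInverse Φinv Φ)
    (hright : Function.RightInverse Φinv Φ)
    (hpres : MeasurePreserving Φ μ μ)
    (hεpres : MeasurePreserving ε μ μ)
    (hεinv : ε ∘ ε = id)
    (hεΦ : ε ∘ Φ = Φinv ∘ ε)
    (Ψ : X → Fin N → ℝ) (hΨ : Measurable Ψ)
    (hint1 : ∀ i j, Integrable (fun x => Ψ x i * Ψ (Φ x) j) μ)
    (hint2 : ∀ i j, Integrable (fun x => Ψ x i * Ψ (Φinv x) j) μ)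
    (M : Matrix (Fin N) (Fin N) ℝ)
    (hM : ∀ x, Ψ (ε x) = M.mulVec (Ψ x)) :
    (Matrix.of fun i j => ∫ x, Ψ x i * Ψ (Φinv x) j ∂μ) =
      M * (Matrix.of fun i j => ∫ x, Ψ x i * Ψ (Φ x) j ∂μ) * Mᵀ := by
  ext i j
  have hεfun : ∀ x, ε (ε x) = x := fun x => congrFun hεinv x
  let e : X ≃ᵐ X :=
    { toFun := ε, invFun := ε, left_inv := hεfun, right_inv := hεfun,
      measurable_toFun := hε, measurable_invFun := hε }
  have hemb : MeasurableEmbedding ε := e.measurableEmbedding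
  have h1 : (∫ x, Ψ x i * Ψ (Φinv x) j ∂μ)
      = ∫ x, Ψ (ε x) i * Ψ (Φinv (ε x)) j ∂μ :=
    (hεpres.integral_comp hemb (fun x => Ψ x i * Ψ (Φinv x) j)).symm
  have h2 : ∀ x, Ψ (ε x) i * Ψ (Φinv (ε x)) j
      = ∑ k, ∑ l, M i k * M j l * (Ψ x k * Ψ (Φ x) l) := by
    intro x
    have hcomm : Φinv (ε x) = ε (Φ x) := (congrFun hεΦ x).symm
    rw [hcomm, hM, hM]
    simp only [Matrix.mulVec, dotProduct, Finset.sum_mul, Finset.mul_sum]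
    rw [Finset.sum_comm]
    refine Finset.sum_congr rfl fun k _ => Finset.sum_congr rfl fun l _ => by ring
  simp only [Matrix.of_apply]
  rw [h1]
  simp only [h2]
  have key : (∫ x, ∑ k, ∑ l, M i k * M j l * (Ψ x k * Ψ (Φ x) l) ∂μ)
      = ∑ k, ∑ l, M i k * M j l * ∫ x, Ψ x k * Ψ (Φ x) l ∂μ := by
    rw [integral_finset_sum _ (fun k _ => integrable_finset_sum _
      (fun l _ => ((hint1 k l).const_mul (M i k * M j l))))]
    refine Finset.sum_congr rfl fun k _ => ?_
    rw [integral_finset_sum _ (fun l _ => ((hint1 k l).const_mul (M i k * M j l)))]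
    exact Finset.sum_congr rfl fun l _ => integral_const_mul _ _
  rw [key]
  simp only [Matrix.mul_apply, Matrix.transpose_apply, Matrix.of_apply, Finset.sum_mul]
  rw [Finset.sum_comm]
  refine Finset.sum_congr rfl fun k _ => Finset.sum_congr rfl fun l _ => by ring
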